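/- arXiv:math/0002044 — 6 statements merged into one kernel-verified Lean document; each statement's English description precedes it below -/
import Mathlib

section
/- The Verlinde formula holds for A_1 level k: for all a,b,c ∈ {0,...,k}, N_{ab}^c = Σ_{d=0}^{k} S_{ad} S_{bd} (conj S_{cd}) / S_{0d}, where S_{ab} = sqrt(2/(k+2)) sin(π(a+1)(b+1)/(k+2)). -/
open Real Finset

/-- The A₁ level k fusion coefficients. -/
def A1Fusion (k : ℕ) (a b c : Fin (k+1)) : ℕ :=
  if ((a : ℤ) + b + c) % 2 = 0 ∧ |(a : ℤ) - b| ≤ c ∧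
      (c : ℤ) ≤ min ((a : ℤ) + b) (2 * k - a - b) then 1 else 0

/-- The A₁ level k Kac-Peterson matrix. -/
noncomputable def A1S (k : ℕ) (a b : Fin (k+1)) : ℝ :=
  Real.sqrt (2 / (k + 2)) * Real.sin (π * (a + 1) * (b + 1) / (k + 2))


lemma tele1 (e m x : ℝ) :
    Real.sin ((e+1+2*m)*x) * Real.sin x
      = Real.cos ((e+2*m)*x)/2 - Real.cos ((e+2*(m+1))*x)/2 := by
  rw [div_sub_div_same, Real.cos_sub_cos,
    show ((e+2*m)*x + (e+2*(m+1))*x)/2 = (e+1+2*m)*x by ring,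
    show ((e+2*m)*x - (e+2*(m+1))*x)/2 = -x by ring, Real.sin_neg]
  ring

lemma tele_end (A B x : ℝ) :
    Real.cos ((B-A+2*(0:ℝ))*x)/2 - Real.cos ((B-A+2*(A+1))*x)/2
      = Real.sin ((A+1)*x) * Real.sin ((B+1)*x) := by
  rw [div_sub_div_same, Real.cos_sub_cos,
    show ((B-A+2*(0:ℝ))*x + (B-A+2*(A+1))*x)/2 = (B+1)*x by ring,
    show ((B-A+2*(0:ℝ))*x - (B-A+2*(A+1))*x)/2 = -((A+1)*x) by ring, Real.sin_neg]
  ring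

lemma prod_sin_sin (a b : ℕ) (hab : a ≤ b) (x : ℝ) :
    Real.sin ((a+1)*x) * Real.sin ((b+1)*x)
      = ∑ m ∈ Finset.range (a+1), Real.sin ((((b-a : ℕ):ℝ)+1+2*m)*x) * Real.sin x := by
  have hba : ((b - a : ℕ):ℝ) = (b:ℝ) - a := by rw [Nat.cast_sub hab]
  set f : ℕ → ℝ := fun m => Real.cos ((((b-a:ℕ):ℝ)+2*m)*x)/2 with hf
  calc Real.sin ((a+1)*x) * Real.sin ((b+1)*x)
      = f 0 - f (a+1) := by
        simp only [hf, Nat.cast_zero, Nat.cast_add, Nat.cast_one, hba]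
        exact (tele_end a b x).symm
    _ = ∑ m ∈ Finset.range (a+1), Real.sin ((((b-a : ℕ):ℝ)+1+2*m)*x) * Real.sin x := by
        rw [← Finset.sum_range_sub' f (a+1)]
        refine (Finset.sum_congr rfl (fun m _ => ?_)).symm
        simp only [hf, Nat.cast_add, Nat.cast_one]
        exact tele1 _ _ _

lemma count_aux (N p q : ℕ) :
    ∑ m ∈ Finset.range N, (if p + 2*m = q then (1:ℝ) else 0)
      = if p ≤ q ∧ (q - p) % 2 = 0 ∧ q < p + 2*N then 1 else 0 := by
  induction N with
  | zero => rw [if_neg (by omega)]; simp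
  | succ N ih =>
    rw [Finset.sum_range_succ, ih]
    split_ifs <;> first | (exfalso; omega) | norm_num

lemma sin_ndiv_ne_zero (n m : ℕ) (hn : 1 ≤ n) (h : ¬ (2*n ∣ m)) :
    Real.sin ((m:ℝ)*π/(2*n)) ≠ 0 := by
  intro h0
  rw [Real.sin_eq_zero_iff] at h0
  obtain ⟨z, hz⟩ := h0
  have hn0 : ((n:ℝ)) ≠ 0 := by positivity
  have : (z:ℝ) * (2*n) = m := by
    field_simp at hz
    have hpi : (π:ℝ) ≠ 0 := Real.pi_ne_zero
    have := mul_right_cancel₀ hpi (by rw [← hz]; ring : (z:ℝ) * (2*n) * π = (m:ℝ) * π)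
    linarith [this]
  have hz' : z * (2*(n:ℤ)) = m := by exact_mod_cast this
  apply h
  have hz0 : 0 ≤ z := by nlinarith [hz', Int.ofNat_nonneg m, (by positivity : (0:ℤ) < 2*(n:ℤ))]
  obtain ⟨w, rfl⟩ := Int.eq_ofNat_of_zero_le hz0
  refine ⟨w, ?_⟩
  have : (m:ℤ) = 2*(n:ℤ)*w := by linarith [hz']
  exact_mod_cast this

lemma cos_sum (n m : ℕ) (hn : 1 ≤ n) :
    ∑ d ∈ Finset.range n, Real.cos ((m:ℝ)*π*d/n)
      = if 2*n ∣ m then (n:ℝ) else if Even m then 0 else 1 := by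
  have hn0 : ((n:ℝ)) ≠ 0 := by positivity
  by_cases h : 2*n ∣ m
  · rw [if_pos h]
    obtain ⟨t, rfl⟩ := h
    have : ∀ d ∈ Finset.range n, Real.cos (((2*n*t : ℕ):ℝ)*π*d/n) = 1 := by
      intro d _
      rw [show (((2*n*t : ℕ):ℝ)*π*d/n) = ((t*d : ℤ):ℝ) * (2*π) by push_cast; field_simp]
      exact Real.cos_int_mul_two_pi _
    rw [Finset.sum_congr rfl this]
    simp
  · rw [if_neg h]
    set s : ℝ := (m:ℝ)*π/(2*n) with hs
    have hsne : Real.sin s ≠ 0 := sin_ndiv_ne_zero n m hn h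
    set g : ℕ → ℝ := fun d => Real.sin ((2*(d:ℝ)-1) * ((m:ℝ)*π)/(2*n)) with hg
    have expand : ∀ d : ℕ, g (d+1) - g d = 2 * Real.sin s * Real.cos ((m:ℝ)*π*d/n) := by
      intro d
      simp only [hg, Nat.cast_add, Nat.cast_one]
      rw [Real.sin_sub_sin,
        show ((2*((d:ℝ)+1)-1) * ((m:ℝ)*π)/(2*n) - (2*(d:ℝ)-1) * ((m:ℝ)*π)/(2*n))/2 = s by
          rw [hs]; field_simp; ring,
        show ((2*((d:ℝ)+1)-1) * ((m:ℝ)*π)/(2*n) + (2*(d:ℝ)-1) * ((m:ℝ)*π)/(2*n))/2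
            = (m:ℝ)*π*d/n by field_simp; ring]
    have tele := Finset.sum_range_sub g n
    rw [Finset.sum_congr rfl (fun d _ => expand d)] at tele
    rw [← Finset.mul_sum] at tele
    -- tele : 2 * sin s * ∑ ... = g n - g 0
    have hg0 : g 0 = - Real.sin s := by
      simp only [hg, Nat.cast_zero]
      rw [show (2*(0:ℝ)-1) * ((m:ℝ)*π)/(2*n) = -s by rw [hs]; ring, Real.sin_neg]
    rcases Nat.even_or_odd m with he | ho
    · rw [if_pos he]
      obtain ⟨t, rfl⟩ := he
      have hgn : g n = Real.sin s - 2 * Real.sin s := by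
        simp only [hg]
        rw [show (2*(n:ℝ)-1) * (((t+t : ℕ):ℝ)*π)/(2*n) = -s + (t:ℤ)*(2*π) by
          rw [hs]; push_cast; field_simp; ring]
        rw [Real.sin_add_int_mul_two_pi, Real.sin_neg]
        ring
      rw [hgn, hg0] at tele
      have : (2 * Real.sin s) * (∑ d ∈ Finset.range n, Real.cos (((t+t:ℕ):ℝ)*π*d/n)) = (2 * Real.sin s) * 0 := by
        rw [tele]; ring
      exact mul_left_cancel₀ (by simpa using hsne) this
    · rw [if_neg (Nat.not_even_iff_odd.mpr ho)]
      obtain ⟨t, rfl⟩ := ho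
      have hgn : g n = Real.sin s := by
        simp only [hg]
        rw [show (2*(n:ℝ)-1) * (((2*t+1 : ℕ):ℝ)*π)/(2*n) = (π - s) + (t:ℤ)*(2*π) by
          rw [hs]; push_cast; field_simp; ring]
        rw [Real.sin_add_int_mul_two_pi, Real.sin_pi_sub]
      rw [hgn, hg0] at tele
      have : (2 * Real.sin s) * (∑ d ∈ Finset.range n, Real.cos (((2*t+1:ℕ):ℝ)*π*d/n)) = (2 * Real.sin s) * 1 := by
        rw [tele]; ring
      exact mul_left_cancel₀ (by simpa using hsne) this

lemma sin_mul_sin (p q : ℕ) (h : q ≤ p) (x : ℝ) :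
    Real.sin (p*x) * Real.sin (q*x)
      = (Real.cos (((p-q:ℕ):ℝ)*x) - Real.cos (((p+q:ℕ):ℝ)*x))/2 := by
  have h1 : ((p-q:ℕ):ℝ) = (p:ℝ) - q := by rw [Nat.cast_sub h]
  have h2 : ((p+q:ℕ):ℝ) = (p:ℝ) + q := by push_cast; ring
  rw [h1, h2, Real.cos_sub_cos,
    show (((p:ℝ)-q)*x + ((p:ℝ)+q)*x)/2 = (p:ℝ)*x by ring,
    show (((p:ℝ)-q)*x - ((p:ℝ)+q)*x)/2 = -((q:ℝ)*x) by ring,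
    Real.sin_neg]
  ring

lemma orth (n c j : ℕ) (hn : 1 ≤ n) (hc1 : 1 ≤ c) (hc2 : c < n) (hj1 : 1 ≤ j) (hj2 : j < 2*n) :
    ∑ d ∈ Finset.range n, Real.sin ((j:ℝ)*π*d/n) * Real.sin ((c:ℝ)*π*d/n)
      = ((if j = c then (n:ℝ) else 0) - (if j + c = 2*n then (n:ℝ) else 0)) / 2 := by
  -- reduce to cosine sums
  obtain ⟨e, hpoint, he0, helt, hepar⟩ :
      ∃ e : ℕ, (∀ d : ℕ, Real.sin ((j:ℝ)*π*d/n) * Real.sin ((c:ℝ)*π*d/n)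
          = (Real.cos ((e:ℝ)*π*d/n) - Real.cos (((j+c:ℕ):ℝ)*π*d/n))/2)
        ∧ (e = 0 ↔ j = c) ∧ e < 2*n ∧ (Even e ↔ Even (j+c)) := by
    rcases le_total c j with h | h
    · refine ⟨j - c, fun d => ?_, by omega, by omega, by
        simp only [Nat.even_iff]; omega⟩
      have := sin_mul_sin j c h ((π*d)/n)
      rw [show ((j:ℝ)*(π*d/n)) = (j:ℝ)*π*d/n by ring,
          show ((c:ℝ)*(π*d/n)) = (c:ℝ)*π*d/n by ring,
          show (((j-c:ℕ):ℝ)*(π*d/n)) = ((j-c:ℕ):ℝ)*π*d/n by ring,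
          show (((j+c:ℕ):ℝ)*(π*d/n)) = ((j+c:ℕ):ℝ)*π*d/n by ring] at this
      exact this
    · refine ⟨c - j, fun d => ?_, by omega, by omega, by
        simp only [Nat.even_iff]; omega⟩
      have := sin_mul_sin c j h ((π*d)/n)
      rw [show ((j:ℝ)*(π*d/n)) = (j:ℝ)*π*d/n by ring,
          show ((c:ℝ)*(π*d/n)) = (c:ℝ)*π*d/n by ring,
          show (((c-j:ℕ):ℝ)*(π*d/n)) = ((c-j:ℕ):ℝ)*π*d/n by ring,
          show (((c+j:ℕ):ℝ)*(π*d/n)) = ((c+j:ℕ):ℝ)*π*d/n by ring,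
          show ((c+j:ℕ)) = ((j+c:ℕ)) by omega] at this
      rw [mul_comm]
      exact this
  rw [Finset.sum_congr rfl (fun d _ => hpoint d)]
  rw [← Finset.sum_div, Finset.sum_sub_distrib, cos_sum n e hn, cos_sum n (j+c) hn]
  have hjc4 : j + c < 4*n := by omega
  have hjc0 : 0 < j + c := by omega
  have h1 : (2*n ∣ e) ↔ j = c := by
    constructor
    · intro hd
      apply he0.mp
      rcases Nat.eq_zero_or_pos e with h|h
      · exact h
      · exact absurd (Nat.le_of_dvd h hd) (by omega)
    · intro hd; rw [he0.mpr hd]; exact Dvd.intro 0 rfl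
  have h2 : (2*n ∣ (j+c)) ↔ j + c = 2*n := by
    constructor
    · intro hd
      obtain ⟨w, hw⟩ := hd
      match w with
      | 0 => omega
      | 1 => omega
      | (x+2) =>
        exfalso
        have : 2*n*2 ≤ 2*n*(x+2) := Nat.mul_le_mul_left _ (by omega)
        omega
    · intro hd; exact ⟨1, by omega⟩
  rcases Nat.even_or_odd (j+c) with hev | hod
  · rw [if_pos hev, if_pos (hepar.mpr hev)]
    simp only [h1, h2]
  · have h3 : ¬ Even (j+c) := Nat.not_even_iff_odd.mpr hod
    have he' : ¬ Even e := fun hh => h3 (hepar.mp hh)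
    have hd1 : ¬ 2*n ∣ e := fun hd => he' (by obtain ⟨w, hw⟩ := hd; exact ⟨n*w, by rw [hw]; ring⟩)
    have hd2 : ¬ 2*n ∣ (j+c) := fun hd => h3 (by obtain ⟨w, hw⟩ := hd; exact ⟨n*w, by rw [hw]; ring⟩)
    rw [if_neg hd1, if_neg he', if_neg hd2, if_neg h3,
        if_neg (fun hh : j = c => h3 ⟨c, by omega⟩),
        if_neg (fun hh : j + c = 2*n => h3 ⟨n, by omega⟩)]
    ring

lemma core (k a b c : ℕ) (hb : b ≤ k) (hc : c ≤ k) (hab : a ≤ b) :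
    ∑ d ∈ Finset.range (k+1),
      2/((k:ℝ)+2) * (Real.sin ((a+1) * (π*((d:ℕ)+1)/((k:ℝ)+2)))
        * Real.sin ((b+1) * (π*((d:ℕ)+1)/((k:ℝ)+2)))
        * Real.sin ((c+1) * (π*((d:ℕ)+1)/((k:ℝ)+2)))
        / Real.sin (π*((d:ℕ)+1)/((k:ℝ)+2)))
    = if (a+b+c) % 2 = 0 ∧ b - a ≤ c ∧ c ≤ a + b ∧ a+b+c ≤ 2*k then 1 else 0 := by
  have ha : a ≤ k := le_trans hab hb
  have hk2 : (0:ℝ) < (k:ℝ)+2 := by positivity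
  have step1 : ∀ d ∈ Finset.range (k+1),
      2/((k:ℝ)+2) * (Real.sin ((a+1) * (π*((d:ℕ)+1)/((k:ℝ)+2)))
        * Real.sin ((b+1) * (π*((d:ℕ)+1)/((k:ℝ)+2)))
        * Real.sin ((c+1) * (π*((d:ℕ)+1)/((k:ℝ)+2)))
        / Real.sin (π*((d:ℕ)+1)/((k:ℝ)+2)))
      = ∑ m ∈ Finset.range (a+1),
          2/((k:ℝ)+2) * (Real.sin ((((b-a:ℕ):ℝ)+1+2*m) * (π*((d:ℕ)+1)/((k:ℝ)+2)))
            * Real.sin ((c+1) * (π*((d:ℕ)+1)/((k:ℝ)+2)))) := by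
    intro d hd
    rw [Finset.mem_range] at hd
    set x : ℝ := π*((d:ℕ)+1)/((k:ℝ)+2) with hx
    have hxpos : 0 < x := by
      rw [hx]; positivity
    have hxlt : x < π := by
      rw [hx, div_lt_iff₀ hk2]
      have : ((d:ℝ)+1) < (k:ℝ)+2 := by
        have : (d:ℝ) < (k:ℝ)+1 := by exact_mod_cast hd
        linarith
      nlinarith [Real.pi_pos]
    have hsin : Real.sin x ≠ 0 := ne_of_gt (Real.sin_pos_of_pos_of_lt_pi hxpos hxlt)
    rw [prod_sin_sin a b hab x, ← Finset.sum_mul]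
    have cancel : ∀ S : ℝ, S * Real.sin x * Real.sin ((c+1)*x) / Real.sin x
        = S * Real.sin ((c+1)*x) := by
      intro S; field_simp
    rw [cancel, Finset.sum_mul, Finset.mul_sum]
  rw [Finset.sum_congr rfl step1, Finset.sum_comm]
  have step3 : ∀ m ∈ Finset.range (a+1),
      (∑ d ∈ Finset.range (k+1),
        2/((k:ℝ)+2) * (Real.sin ((((b-a:ℕ):ℝ)+1+2*m) * (π*((d:ℕ)+1)/((k:ℝ)+2)))
          * Real.sin ((c+1) * (π*((d:ℕ)+1)/((k:ℝ)+2)))))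
      = (if b-a+1+2*m = c+1 then (1:ℝ) else 0)
        - (if (b-a+1+2*m) + (c+1) = 2*(k+2) then (1:ℝ) else 0) := by
    intro m hm
    rw [Finset.mem_range] at hm
    rw [← Finset.mul_sum]
    have horth := orth (k+2) (c+1) (b-a+1+2*m) (by omega) (by omega) (by omega) (by omega)
      (by omega)
    rw [Finset.sum_range_succ'] at horth
    simp only [Nat.cast_zero, mul_zero, zero_div, Real.sin_zero, zero_mul, mul_zero, add_zero] at horth
    have hterm : ∀ d : ℕ,
        Real.sin ((((b-a:ℕ):ℝ)+1+2*m) * (π*((d:ℕ)+1)/((k:ℝ)+2)))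
          * Real.sin ((c+1) * (π*((d:ℕ)+1)/((k:ℝ)+2)))
        = Real.sin (((b-a+1+2*m : ℕ):ℝ)*π*((d+1:ℕ):ℝ)/((k+2:ℕ):ℝ))
          * Real.sin (((c+1:ℕ):ℝ)*π*((d+1:ℕ):ℝ)/((k+2:ℕ):ℝ)) := by
      intro d
      congr 2 <;> push_cast <;> ring
    rw [Finset.sum_congr rfl (fun d _ => hterm d), horth]
    have hcast : ((k+2:ℕ):ℝ) = (k:ℝ)+2 := by push_cast; ring
    rw [hcast]
    split_ifs <;> field_simp <;> ring
  rw [Finset.sum_congr rfl step3, Finset.sum_sub_distrib, count_aux (a+1) (b-a+1) (c+1)]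
  have step4 : ∀ m ∈ Finset.range (a+1),
      (if (b-a+1+2*m) + (c+1) = 2*(k+2) then (1:ℝ) else 0)
      = (if b-a+1+2*m = 2*k+3-c then (1:ℝ) else 0) := by
    intro m _
    exact if_congr (by omega) rfl rfl
  rw [Finset.sum_congr rfl step4, count_aux (a+1) (b-a+1) (2*k+3-c)]
  split_ifs <;> first | (exfalso; omega) | norm_num

lemma ratio_helper (s K SA SB SC SD : ℝ) (hs : s ≠ 0) (hss : s * s = 2/K) :
    (s*SA) * (s*SB) * (s*SC) / (s*SD) = 2/K * (SA*SB*SC/SD) := by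
  rw [show (s*SA) * (s*SB) * (s*SC) = s * (s*s*(SA*SB*SC)) by ring,
    mul_div_mul_left _ _ hs, hss]
  ring

lemma sumform (k : ℕ) (a b c : Fin (k+1)) (hab : (a:ℕ) ≤ (b:ℕ)) :
    ∑ d : Fin (k+1), A1S k a d * A1S k b d * A1S k c d / A1S k 0 d
      = if ((a:ℕ)+b+c) % 2 = 0 ∧ (b:ℕ) - a ≤ c ∧ (c:ℕ) ≤ a + b ∧ (a:ℕ)+b+c ≤ 2*k
        then 1 else 0 := by
  have hk2 : (0:ℝ) < (k:ℝ)+2 := by positivity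
  have hs0 : (0:ℝ) < Real.sqrt (2/((k:ℝ)+2)) := Real.sqrt_pos.mpr (by positivity)
  have hss : Real.sqrt (2/((k:ℝ)+2)) * Real.sqrt (2/((k:ℝ)+2)) = 2/((k:ℝ)+2) :=
    Real.mul_self_sqrt (by positivity)
  set g : ℕ → ℝ := fun i : ℕ => 2/((k:ℝ)+2) * (Real.sin (((a:ℕ)+1) * (π*((i:ℕ)+1)/((k:ℝ)+2)))
        * Real.sin (((b:ℕ)+1) * (π*((i:ℕ)+1)/((k:ℝ)+2)))
        * Real.sin (((c:ℕ)+1) * (π*((i:ℕ)+1)/((k:ℝ)+2)))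
        / Real.sin (π*((i:ℕ)+1)/((k:ℝ)+2))) with hg
  have point : ∀ d : Fin (k+1),
      A1S k a d * A1S k b d * A1S k c d / A1S k 0 d = g (d : ℕ) := by
    intro d
    simp only [A1S, hg]
    rw [ratio_helper _ _ _ _ _ _ (ne_of_gt hs0) hss]
    rw [show π*(((0 : Fin (k+1)):ℝ)+1)*((d:ℝ)+1)/((k:ℝ)+2) = π*((d:ℝ)+1)/((k:ℝ)+2) by
        simp,
      show π*((a:ℝ)+1)*((d:ℝ)+1)/((k:ℝ)+2) = ((a:ℝ)+1)*(π*((d:ℝ)+1)/((k:ℝ)+2)) by ring,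
      show π*((b:ℝ)+1)*((d:ℝ)+1)/((k:ℝ)+2) = ((b:ℝ)+1)*(π*((d:ℝ)+1)/((k:ℝ)+2)) by ring,
      show π*((c:ℝ)+1)*((d:ℝ)+1)/((k:ℝ)+2) = ((c:ℝ)+1)*(π*((d:ℝ)+1)/((k:ℝ)+2)) by ring]
  rw [Finset.sum_congr rfl (fun d _ => point d), Fin.sum_univ_eq_sum_range g (k+1)]
  exact core k (a:ℕ) (b:ℕ) (c:ℕ) (by omega) (by omega) hab

theorem A1_verlinde (k : ℕ) (hk : 0 < k) (a b c : Fin (k+1)) :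
    (A1Fusion k a b c : ℝ) =
      ∑ d : Fin (k+1), A1S k a d * A1S k b d * A1S k c d / A1S k 0 d := by
  rcases le_total (a:ℕ) (b:ℕ) with hab | hab
  · rw [sumform k a b c hab]
    simp only [A1Fusion]
    have hcond : (((a : ℤ) + b + c) % 2 = 0 ∧ |(a : ℤ) - b| ≤ c ∧
        (c : ℤ) ≤ min ((a : ℤ) + b) (2 * k - a - b))
        ↔ (((a:ℕ)+b+c) % 2 = 0 ∧ (b:ℕ) - a ≤ c ∧ (c:ℕ) ≤ a + b ∧ (a:ℕ)+b+c ≤ 2*k) := by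
      rw [abs_sub_le_iff, le_min_iff]
      constructor <;> intro h <;> push_cast at * <;> omega
    rw [if_congr hcond rfl rfl]
    split_ifs <;> simp
  · have comm : ∀ d : Fin (k+1), A1S k a d * A1S k b d * A1S k c d / A1S k 0 d
        = A1S k b d * A1S k a d * A1S k c d / A1S k 0 d := fun d => by ring
    rw [Finset.sum_congr rfl (fun d _ => comm d), sumform k b a c hab]
    simp only [A1Fusion]
    have hcond : (((a : ℤ) + b + c) % 2 = 0 ∧ |(a : ℤ) - b| ≤ c ∧
        (c : ℤ) ≤ min ((a : ℤ) + b) (2 * k - a - b))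
        ↔ (((b:ℕ)+a+c) % 2 = 0 ∧ (a:ℕ) - b ≤ c ∧ (c:ℕ) ≤ b + a ∧ (b:ℕ)+a+c ≤ 2*k) := by
      rw [abs_sub_le_iff, le_min_iff]
      constructor <;> intro h <;> push_cast at * <;> omega
    rw [if_congr hcond rfl rfl]
    split_ifs <;> simp
end

section
/- Let S be a unitary symmetric matrix indexed by a finite set Φ with distinguished element 0 and S_{0b} > 0 for all b, and define N_{ab}^c = Σ_d S_{ad}S_{bd} conj(S_{cd})/S_{0d}. If π, π' are bijections of Φ satisfying S_{πa, π'b} = S_{ab} for all a,b ∈ Φ, then N_{πa,πb}^{πc} = N_{ab}^c for all a,b,c ∈ Φ. -/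
open Matrix Complex

theorem S_symmetry_gives_fusion_symmetry
    {Φ : Type*} [Fintype Φ] [DecidableEq Φ] (z : Φ)
    (S : Matrix Φ Φ ℂ)
    (hunit : Sᴴ * S = 1) (hsymm : S.IsSymm)
    (hpos : ∀ b, (S z b).im = 0 ∧ 0 < (S z b).re)
    (N : Φ → Φ → Φ → ℂ)
    (hN : ∀ a b c, N a b c = ∑ d, S a d * S b d * (starRingEnd ℂ) (S c d) / S z d)
    (π π' : Equiv.Perm Φ)
    (hS : ∀ a b, S (π a) (π' b) = S a b) :
    ∀ a b c, N (π a) (π b) (π c) = N a b c := by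
  have hsym : ∀ i j, S i j = S j i := fun i j => by
    conv_lhs => rw [← hsymm]
    rfl
  have hπz : π z = z := by
    by_contra hne
    have h1 : (Sᴴ * S) (π z) z = (1 : Matrix Φ Φ ℂ) (π z) z := by rw [hunit]
    rw [Matrix.one_apply_ne hne] at h1
    have h2 : (Sᴴ * S) (π z) z = ∑ d, (starRingEnd ℂ) (S z (π'.symm d)) * S z d := by
      rw [Matrix.mul_apply]
      apply Finset.sum_congr rfl
      intro d _
      have : S (π z) d = S z (π'.symm d) := by
        conv_lhs => rw [show d = π' (π'.symm d) from (π'.apply_symm_apply d).symm]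
        exact hS z (π'.symm d)
      rw [Matrix.conjTranspose_apply, hsym d (π z), this, hsym d z]
      rfl
    have hre : 0 < ((Sᴴ * S) (π z) z).re := by
      rw [h2, Complex.re_sum]
      apply Finset.sum_pos
      · intro d _
        have h3 := hpos (π'.symm d)
        have h4 := hpos d
        rw [Complex.conj_eq_iff_im.mpr h3.1] at *
        simp only [Complex.mul_re, Complex.conj_re, Complex.conj_im, h3.1, h4.1, neg_zero,
          mul_zero, zero_mul, sub_zero]
        exact mul_pos h3.2 h4.2
      · exact ⟨z, Finset.mem_univ z⟩
    rw [h1] at hre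
    simp at hre
  intro a b c
  rw [hN, hN]
  refine (Fintype.sum_equiv π' _ _ ?_).symm
  intro d
  have hz : S z (π' d) = S z d := by conv_lhs => rw [← hπz, hS]
  rw [hS a d, hS b d, hS c d, hz]
end

section
/- Let S be a unitary symmetric matrix indexed by finite Φ with S_{0b} > 0 for all b, and fusion coefficients N_{ab}^c = Σ_d S_{ad}S_{bd} conj(S_{cd})/S_{0d}. If π is a permutation of Φ with N_{πa,πb}^{πc} = N_{ab}^c for all a,b,c, then there is a permutation π' of Φ such that S_{πa,π'b} = S_{ab} for all a,b ∈ Φ. -/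
open Matrix Complex

theorem fusion_symmetry_gives_S_symmetry
    {Φ : Type*} [Fintype Φ] [DecidableEq Φ] (z : Φ)
    (S : Matrix Φ Φ ℂ)
    (hunit : Sᴴ * S = 1) (hsymm : S.IsSymm)
    (hpos : ∀ b, (S z b).im = 0 ∧ 0 < (S z b).re)
    (N : Φ → Φ → Φ → ℂ)
    (hN : ∀ a b c, N a b c = ∑ d, S a d * S b d * (starRingEnd ℂ) (S c d) / S z d)
    (π : Equiv.Perm Φ)
    (hπ : ∀ a b c, N (π a) (π b) (π c) = N a b c) :
    ∃ π' : Equiv.Perm Φ, ∀ a b, S (π a) (π' b) = S a b := by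
  have hSz : ∀ d, S z d ≠ 0 := by
    intro d h
    have h2 := (hpos d).2
    rw [h] at h2
    simp at h2
  have horth : ∀ e d, ∑ c, (starRingEnd ℂ) (S c e) * S c d = if e = d then 1 else 0 := by
    intro e d
    have := congrFun (congrFun hunit e) d
    simpa [Matrix.mul_apply, Matrix.one_apply, Matrix.conjTranspose_apply] using this
  have hrow : ∀ b b', ∑ e, S b e * (starRingEnd ℂ) (S b' e) = if b = b' then 1 else 0 := by
    intro b b'
    have h1 : S * Sᴴ = 1 := mul_eq_one_comm.mp hunit
    have := congrFun (congrFun h1 b) b'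
    simpa [Matrix.mul_apply, Matrix.one_apply, Matrix.conjTranspose_apply] using this
  -- columns of S are eigenvectors of the fusion matrices
  have heig : ∀ a b d, ∑ c, N a b c * S c d = S a d * S b d / S z d := by
    intro a b d
    calc ∑ c, N a b c * S c d
        = ∑ c, ∑ e, (S a e * S b e / S z e) * ((starRingEnd ℂ) (S c e) * S c d) := by
          refine Finset.sum_congr rfl fun c _ => ?_
          rw [hN, Finset.sum_mul]
          refine Finset.sum_congr rfl fun e _ => ?_
          ring
      _ = ∑ e, (S a e * S b e / S z e) * ∑ c, (starRingEnd ℂ) (S c e) * S c d := by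
          rw [Finset.sum_comm]
          simp [Finset.mul_sum]
      _ = S a d * S b d / S z d := by
          simp only [horth, mul_ite, mul_one, mul_zero]
          simp
  -- the permuted columns are simultaneous eigenvectors as well
  have heigw : ∀ a b d, ∑ c, N a b c * S (π.symm c) d
      = S (π.symm a) d * S (π.symm b) d / S z d := by
    intro a b d
    have hN' : ∀ a b c, N a b c = N (π.symm a) (π.symm b) (π.symm c) := by
      intro a b c
      simpa using hπ (π.symm a) (π.symm b) (π.symm c)
    calc ∑ c, N a b c * S (π.symm c) d
        = ∑ c, N (π.symm a) (π.symm b) (π.symm c) * S (π.symm c) d := by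
          simp only [← hN']
      _ = ∑ c, N (π.symm a) (π.symm b) c * S c d :=
          Equiv.sum_comp π.symm (fun c => N (π.symm a) (π.symm b) c * S c d)
      _ = _ := heig _ _ _
  set C : Φ → Φ → ℂ := fun d e => ∑ b, (starRingEnd ℂ) (S b e) * S (π.symm b) d with hC
  have hkey : ∀ d e a, (S (π.symm a) d / S z d) * C d e = (S a e / S z e) * C d e := by
    intro d e a
    have lhs : ∑ b, (starRingEnd ℂ) (S b e) * (∑ c, N a b c * S (π.symm c) d)
        = (S (π.symm a) d / S z d) * C d e := by
      simp only [heigw]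
      rw [hC, Finset.mul_sum]
      refine Finset.sum_congr rfl fun b _ => ?_
      ring
    have mid : ∀ c, ∑ b, (starRingEnd ℂ) (S b e) * N a b c
        = S a e * (starRingEnd ℂ) (S c e) / S z e := by
      intro c
      calc ∑ b, (starRingEnd ℂ) (S b e) * N a b c
          = ∑ b, ∑ f, (S a f * (starRingEnd ℂ) (S c f) / S z f)
              * ((starRingEnd ℂ) (S b e) * S b f) := by
            refine Finset.sum_congr rfl fun b _ => ?_
            rw [hN, Finset.mul_sum]
            refine Finset.sum_congr rfl fun f _ => ?_
            ring
        _ = ∑ f, (S a f * (starRingEnd ℂ) (S c f) / S z f)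
              * ∑ b, (starRingEnd ℂ) (S b e) * S b f := by
            rw [Finset.sum_comm]
            simp [Finset.mul_sum]
        _ = S a e * (starRingEnd ℂ) (S c e) / S z e := by
            simp only [horth, mul_ite, mul_one, mul_zero]
            simp
    have rhs : ∑ b, (starRingEnd ℂ) (S b e) * (∑ c, N a b c * S (π.symm c) d)
        = (S a e / S z e) * C d e := by
      calc ∑ b, (starRingEnd ℂ) (S b e) * (∑ c, N a b c * S (π.symm c) d)
          = ∑ b, ∑ c, ((starRingEnd ℂ) (S b e) * N a b c) * S (π.symm c) d := by
            refine Finset.sum_congr rfl fun b _ => ?_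
            rw [Finset.mul_sum]
            refine Finset.sum_congr rfl fun c _ => ?_
            ring
        _ = ∑ c, (∑ b, (starRingEnd ℂ) (S b e) * N a b c) * S (π.symm c) d := by
            rw [Finset.sum_comm]
            simp [Finset.sum_mul]
        _ = ∑ c, (S a e * (starRingEnd ℂ) (S c e) / S z e) * S (π.symm c) d := by
            simp only [mid]
        _ = (S a e / S z e) * C d e := by
            rw [hC, Finset.mul_sum]
            refine Finset.sum_congr rfl fun c _ => ?_
            ring
    exact lhs.symm.trans rhs
  -- each permuted column has a nonzero coefficient
  have hex : ∀ d, ∃ e, C d e ≠ 0 := by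
    intro d
    by_contra h
    push_neg at h
    have hw : ∀ b, S (π.symm b) d = 0 := by
      intro b
      have hwe : ∑ e, S b e * C d e = S (π.symm b) d := by
        calc ∑ e, S b e * C d e
            = ∑ e, ∑ b', (S b e * (starRingEnd ℂ) (S b' e)) * S (π.symm b') d := by
              refine Finset.sum_congr rfl fun e _ => ?_
              rw [hC, Finset.mul_sum]
              refine Finset.sum_congr rfl fun b' _ => ?_
              ring
          _ = ∑ b', (∑ e, S b e * (starRingEnd ℂ) (S b' e)) * S (π.symm b') d := by
              rw [Finset.sum_comm]
              simp [Finset.sum_mul]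
          _ = S (π.symm b) d := by
              simp only [hrow, ite_mul, one_mul, zero_mul]
              simp
      rw [← hwe]
      simp [h]
    have := hw (π z)
    simp only [Equiv.symm_apply_apply] at this
    exact hSz d this
  -- main step: for each d there is e with S (π a) e = S a d for all a
  have hmain : ∀ d, ∃ e, ∀ a, S (π a) e = S a d := by
    intro d
    obtain ⟨e, he⟩ := hex d
    refine ⟨e, fun a => ?_⟩
    have hq : ∀ a, S (π.symm a) d / S z d = S a e / S z e := by
      intro a
      exact mul_right_cancel₀ he (hkey d e a)
    have hq' : ∀ a, S a d / S z d = S (π a) e / S z e := by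
      intro a
      have := hq (π a)
      simpa using this
    -- t = S z e / S z d is a positive real
    set p : ℝ := (S z e).re with hp
    set q : ℝ := (S z d).re with hqq
    have hpe : S z e = (p : ℂ) := by
      apply Complex.ext <;> simp [hp, (hpos e).1]
    have hqe : S z d = (q : ℂ) := by
      apply Complex.ext <;> simp [hqq, (hpos d).1]
    have hppos : 0 < p := (hpos e).2
    have hqpos : 0 < q := (hpos d).2
    have hpne : ((p : ℂ)) ≠ 0 := by exact_mod_cast hppos.ne'
    have hqne : ((q : ℂ)) ≠ 0 := by exact_mod_cast hqpos.ne'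
    have hform : ∀ a, S (π a) e = S a d * ((p / q : ℝ) : ℂ) := by
      intro a
      have h1 := hq' a
      rw [hpe, hqe, div_eq_div_iff hqne hpne] at h1
      push_cast
      rw [mul_div_assoc']
      rw [eq_div_iff hqne]
      linear_combination -h1
    -- norm argument forces p / q = 1
    have hnorm1 : ∑ a, (starRingEnd ℂ) (S a e) * S a e = 1 := by
      rw [horth e e]; simp
    have hnorm2 : ∑ a, (starRingEnd ℂ) (S a d) * S a d = 1 := by
      rw [horth d d]; simp
    have hre : (((p / q) * (p / q) : ℝ) : ℂ) = 1 := by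
      have hcomp : ∑ a, (starRingEnd ℂ) (S (π a) e) * S (π a) e = 1 := by
        rw [Equiv.sum_comp π (fun a => (starRingEnd ℂ) (S a e) * S a e)]
        exact hnorm1
      calc (((p / q) * (p / q) : ℝ) : ℂ)
          = (((p / q) * (p / q) : ℝ) : ℂ) * ∑ a, (starRingEnd ℂ) (S a d) * S a d := by
            rw [hnorm2, mul_one]
        _ = ∑ a, (starRingEnd ℂ) (S (π a) e) * S (π a) e := by
            rw [Finset.mul_sum]
            refine Finset.sum_congr rfl fun a _ => ?_
            rw [hform a, _root_.map_mul, Complex.conj_ofReal]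
            push_cast
            ring
        _ = 1 := hcomp
    have ht1 : (p / q) = 1 := by
      have h2 : (p / q) * (p / q) = 1 := by
        exact_mod_cast hre
      have hpos' : 0 < p / q := div_pos hppos hqpos
      rcases mul_self_eq_one_iff.mp h2 with h | h
      · exact h
      · exfalso; rw [h] at hpos'; linarith
    have := hform a
    rw [ht1] at this
    simpa using this
  -- build the permutation
  choose σ hσ using hmain
  have hinj : Function.Injective σ := by
    intro d d' hdd
    have hcol : ∀ a, S a d = S a d' := by
      intro a
      have h1 := hσ d a
      have h2 := hσ d' a
      rw [hdd] at h1
      rw [← h1, h2]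
    by_contra hne
    have h1 := horth d d'
    have h2 := horth d d
    simp only [if_pos rfl, eq_self_iff_true, if_true] at h2
    rw [if_neg hne] at h1
    have : (1 : ℂ) = 0 := by
      rw [← h2, ← h1]
      refine Finset.sum_congr rfl fun c _ => ?_
      rw [hcol c]
    simp at this
  refine ⟨Equiv.ofBijective σ (Finite.injective_iff_bijective.mp hinj), fun a b => ?_⟩
  exact hσ b a
end

section
/- For the A_1 level k fusion ring with k even, the map π(a) = a if a is even and π(a) = k - a if a is odd is a fusion-ring automorphism: N_{πa,πb}^{πc} = N_{ab}^c for all a,b,c ∈ {0,...,k}. -/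
/-- The simple-current automorphism of the A₁ level k fusion ring (k even):
`a ↦ a` for even `a` and `a ↦ k - a` for odd `a`. -/
def A1scAut (k : ℕ) (a : Fin (k+1)) : Fin (k+1) :=
  if (a : ℕ) % 2 = 0 then a else ⟨k - a, by omega⟩

theorem A1scAut_is_fusion_automorphism (k : ℕ) (hk : 0 < k) (hke : k % 2 = 0)
    (a b c : Fin (k+1)) :
    A1Fusion k (A1scAut k a) (A1scAut k b) (A1scAut k c) = A1Fusion k a b c := by
  obtain ⟨a, ha⟩ := a
  obtain ⟨b, hb⟩ := b
  obtain ⟨c, hc⟩ := c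
  simp only [A1scAut]
  split_ifs <;>
    first
    | rfl
    | (simp only [A1Fusion, Fin.val_mk]
       refine if_congr ?_ rfl rfl
       simp only [abs_le, le_min_iff]
       omega)
end

section
/- For the A_1 level k fusion ring with k odd, the identity is the only fusion automorphism: if π is a permutation of {0,...,k} with N_{πa,πb}^{πc} = N_{ab}^c for all a,b,c, then π = id. -/
lemma A1Fusion_eq_one_iff (k : ℕ) (a b c : Fin (k+1)) :
    A1Fusion k a b c = 1 ↔ ((a.val + b.val + c.val) % 2 = 0 ∧ b.val ≤ a.val + c.val ∧
      a.val ≤ b.val + c.val ∧ c.val ≤ a.val + b.val ∧ c.val + a.val + b.val ≤ 2*k) := by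
  have ha : ((a:ℤ)) = (a.val : ℤ) := rfl
  have hb : ((b:ℤ)) = (b.val : ℤ) := rfl
  have hc : ((c:ℤ)) = (c.val : ℤ) := rfl
  simp only [A1Fusion, abs_sub_le_iff, le_min_iff, ha, hb, hc]
  split_ifs with h
  · simp only [true_iff]; omega
  · simp only [Nat.zero_ne_one, false_iff]; omega

set_option maxHeartbeats 1000000 in
theorem A1_odd_level_no_nontrivial_automorphism (k : ℕ) (hk : 0 < k)
    (hko : k % 2 = 1) (π : Equiv.Perm (Fin (k+1)))
    (hπ : ∀ a b c, A1Fusion k (π a) (π b) (π c) = A1Fusion k a b c) :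
    π = 1 := by
  have hπs : ∀ a b c, A1Fusion k (π.symm a) (π.symm b) (π.symm c) = A1Fusion k a b c := by
    intro a b c
    conv_rhs => rw [← Equiv.apply_symm_apply π a, ← Equiv.apply_symm_apply π b,
      ← Equiv.apply_symm_apply π c]
    rw [hπ]
  have hle : ∀ a : Fin (k+1), a.val ≤ k := fun a => Nat.lt_succ_iff.mp a.isLt
  have heven : ∀ (σ : Equiv.Perm (Fin (k+1))),
      (∀ a b c, A1Fusion k (σ a) (σ b) (σ c) = A1Fusion k a b c) →
      ∀ c : Fin (k+1), c.val % 2 = 0 → (σ c).val % 2 = 0 := by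
    intro σ hσ c hc
    have hck := hle c
    have hh : c.val / 2 < k + 1 := by omega
    have h1 : A1Fusion k ⟨c.val/2, hh⟩ ⟨c.val/2, hh⟩ c = 1 := by
      rw [A1Fusion_eq_one_iff]
      simp only [Fin.val_mk, true_and]
      omega
    have h2 := (A1Fusion_eq_one_iff k _ _ _).mp
      ((hσ ⟨c.val/2, hh⟩ ⟨c.val/2, hh⟩ c).trans h1)
    omega
  have hpar : ∀ c : Fin (k+1), (π c).val % 2 = c.val % 2 := by
    intro c
    by_cases he : c.val % 2 = 0
    · rw [heven π hπ c he, he]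
    · have h2 : ¬ ((π c).val % 2 = 0) := by
        intro h
        have h3 := heven π.symm hπs (π c) h
        rw [Equiv.symm_apply_apply] at h3
        exact he h3
      omega
  -- π 0 = 0
  have h0 : π 0 = 0 := by
    have h2 : A1Fusion k (π 0) (π 0) 0 = 1 := by
      rw [A1Fusion_eq_one_iff]
      have := hle (π 0)
      simp only [Fin.val_zero]
      omega
    have h1 : A1Fusion k 0 0 (π.symm 0) = 1 := by
      rw [← hπ 0 0 (π.symm 0), Equiv.apply_symm_apply]
      exact h2
    rw [A1Fusion_eq_one_iff] at h1
    simp only [Fin.val_zero] at h1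
    have h4 : π.symm 0 = 0 := by
      apply Fin.ext
      simp only [Fin.val_zero]
      omega
    exact ((Equiv.symm_apply_eq π).mp h4).symm
  suffices hfix : ∀ n (hn : n < k+1), π ⟨n, hn⟩ = ⟨n, hn⟩ by
    apply Equiv.ext
    intro a
    rcases a with ⟨n, hn⟩
    simpa using hfix n hn
  intro n
  induction n using Nat.strong_induction_on with
  | _ n IH =>
  intro hn
  match n, hn with
  | 0, hn => simpa using h0
  | 1, hn =>
    have hone0 : π ⟨1, hn⟩ ≠ 0 := by
      intro h
      have := π.injective (h.trans h0.symm)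
      simp [Fin.ext_iff] at this
    rcases Nat.lt_or_ge k 2 with hk2 | hk2
    · -- k = 1
      have h1 := hle (π ⟨1, hn⟩)
      have h2 : (π ⟨1, hn⟩).val ≠ 0 := by
        intro h
        exact hone0 (Fin.ext (by simpa using h))
      apply Fin.ext
      simp only [Fin.val_mk]
      omega
    · -- k ≥ 3 (k odd)
      have hk3 : 3 ≤ k := by omega
      have hl2 : 2 < k + 1 := by omega
      have hxpar : (π ⟨1, hn⟩).val % 2 = 1 := by
        have := hpar ⟨1, hn⟩
        simpa using this
      have hx1 : 1 ≤ (π ⟨1, hn⟩).val := by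
        have h2 : (π ⟨1, hn⟩).val ≠ 0 := by
          intro h
          exact hone0 (Fin.ext (by simpa using h))
        omega
      have hxk := hle (π ⟨1, hn⟩)
      have htwo0 : (π ⟨2, hl2⟩).val ≠ 0 := by
        intro h
        have h2 : π ⟨2, hl2⟩ = π 0 := by rw [h0]; exact Fin.ext (by simpa using h)
        have := π.injective h2
        simp [Fin.ext_iff] at this
      have ha1 : A1Fusion k ⟨1, hn⟩ ⟨1, hn⟩ ⟨2, hl2⟩ = 1 := by
        rw [A1Fusion_eq_one_iff]
        simp only [Fin.val_mk, true_and]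
        omega
      have ha2 := (A1Fusion_eq_one_iff k _ _ _).mp
        ((hπ ⟨1, hn⟩ ⟨1, hn⟩ ⟨2, hl2⟩).trans ha1)
      have hxk1 : (π ⟨1, hn⟩).val ≤ k - 1 := by omega
      -- step B : π two = two
      have hb1 : A1Fusion k (π ⟨1, hn⟩) (π ⟨1, hn⟩) ⟨2, hl2⟩ = 1 := by
        rw [A1Fusion_eq_one_iff]
        simp only [Fin.val_mk, true_and]
        omega
      have hb2 : A1Fusion k ⟨1, hn⟩ ⟨1, hn⟩ (π.symm ⟨2, hl2⟩) = 1 := by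
        have h5 := (hπs (π ⟨1, hn⟩) (π ⟨1, hn⟩) ⟨2, hl2⟩).trans hb1
        simp only [Equiv.symm_apply_apply] at h5
        exact h5
      rw [A1Fusion_eq_one_iff] at hb2
      simp only [Fin.val_mk] at hb2
      have hs20 : (π.symm ⟨2, hl2⟩ : Fin (k+1)).val ≠ 0 := by
        intro h
        have h2 : π.symm ⟨2, hl2⟩ = (0 : Fin (k+1)) := Fin.ext (by simpa using h)
        have h3 := (Equiv.symm_apply_eq π).mp h2
        rw [h0] at h3
        simp [Fin.ext_iff] at h3
      have htwo : π ⟨2, hl2⟩ = ⟨2, hl2⟩ := by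
        have h2 : π.symm ⟨2, hl2⟩ = (⟨2, hl2⟩ : Fin (k+1)) := Fin.ext (by simp only [Fin.val_mk]; omega)
        exact ((Equiv.symm_apply_eq π).mp h2).symm
      -- step C : x = 1
      by_contra hne
      have hx3 : 3 ≤ (π ⟨1, hn⟩).val := by
        have hne1 : (π ⟨1, hn⟩).val ≠ 1 := by
          intro h
          exact hne (Fin.ext (by simpa using h))
        omega
      have hxk2 : (π ⟨1, hn⟩).val ≤ k - 2 := by omega
      have hl4 : 4 < k + 1 := by omega
      have hc1 : A1Fusion k (π ⟨1, hn⟩) (π ⟨1, hn⟩) ⟨4, hl4⟩ = 1 := by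
        rw [A1Fusion_eq_one_iff]
        simp only [Fin.val_mk, true_and]
        omega
      have hc2 : A1Fusion k ⟨1, hn⟩ ⟨1, hn⟩ (π.symm ⟨4, hl4⟩) = 1 := by
        have h5 := (hπs (π ⟨1, hn⟩) (π ⟨1, hn⟩) ⟨4, hl4⟩).trans hc1
        simp only [Equiv.symm_apply_apply] at h5
        exact h5
      rw [A1Fusion_eq_one_iff] at hc2
      simp only [Fin.val_mk] at hc2
      rcases show (π.symm ⟨4, hl4⟩ : Fin (k+1)).val = 0 ∨
          (π.symm ⟨4, hl4⟩ : Fin (k+1)).val = 2 by omega with h4 | h4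
      · have h2 : π.symm ⟨4, hl4⟩ = (0 : Fin (k+1)) := Fin.ext (by simpa using h4)
        have h3 := (Equiv.symm_apply_eq π).mp h2
        rw [h0] at h3
        simp [Fin.ext_iff] at h3
      · have h2 : π.symm ⟨4, hl4⟩ = (⟨2, hl2⟩ : Fin (k+1)) := Fin.ext (by simpa using h4)
        have h3 := (Equiv.symm_apply_eq π).mp h2
        rw [htwo] at h3
        simp [Fin.ext_iff] at h3
  | (m+2), hn =>
    have hlm1 : m + 1 < k + 1 := by omega
    have hlm : m < k + 1 := by omega
    have hl1 : 1 < k + 1 := by omega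
    have h1 := IH 1 (by omega) hl1
    have hm1 := IH (m+1) (by omega) hlm1
    have hm := IH m (by omega) hlm
    have hf : A1Fusion k ⟨m+1, hlm1⟩ ⟨1, hl1⟩ ⟨m+2, hn⟩ = 1 := by
      rw [A1Fusion_eq_one_iff]
      simp only [Fin.val_mk, true_and]
      omega
    have h2 := (hπ ⟨m+1, hlm1⟩ ⟨1, hl1⟩ ⟨m+2, hn⟩).trans hf
    simp only [hm1, h1] at h2
    rw [A1Fusion_eq_one_iff] at h2
    simp only [Fin.val_mk] at h2
    have hpv := hpar ⟨m+2, hn⟩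
    simp only [Fin.val_mk] at hpv
    have hvne : (π ⟨m+2, hn⟩).val ≠ m := by
      intro h
      have he : π ⟨m+2, hn⟩ = π ⟨m, hlm⟩ := by
        rw [hm]; exact Fin.ext (by simpa using h)
      have := π.injective he
      simp [Fin.ext_iff] at this
    apply Fin.ext
    simp only [Fin.val_mk]
    omega
end

section
/- For real x with 0 < x ≤ 2π/9, one has 1 + cos(x) + cos(2x) + cos(4x) > cos(x/2) + cos(3x/2) + cos(5x/2) + cos(7x/2). -/
open Real

theorem D4_cos_inequality (x : ℝ) (hx : 0 < x) (hx' : x ≤ 2 * π / 9) :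
    cos (x / 2) + cos (3 * x / 2) + cos (5 * x / 2) + cos (7 * x / 2) <
      1 + cos x + cos (2 * x) + cos (4 * x) := by
  have hpi : 0 < π := pi_pos
  -- express everything as polynomials in c = cos (x/2)
  have h2 : cos x = 2 * cos (x / 2) ^ 2 - 1 := by
    have := cos_two_mul (x / 2); rw [show 2 * (x / 2) = x by ring] at this; exact this
  have h4 : cos (2 * x) = 2 * cos x ^ 2 - 1 := cos_two_mul x
  have h8 : cos (4 * x) = 2 * cos (2 * x) ^ 2 - 1 := by
    have := cos_two_mul (2 * x); rw [show 2 * (2 * x) = 4 * x by ring] at this; exact this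
  have h3 : cos (3 * x / 2) = 4 * cos (x / 2) ^ 3 - 3 * cos (x / 2) := by
    have := cos_three_mul (x / 2); rw [show 3 * (x / 2) = 3 * x / 2 by ring] at this; exact this
  have h6 : cos (3 * x) = 2 * cos (3 * x / 2) ^ 2 - 1 := by
    have := cos_two_mul (3 * x / 2); rw [show 2 * (3 * x / 2) = 3 * x by ring] at this; exact this
  have h5 : cos (5 * x / 2) + cos (3 * x / 2) = 2 * cos (2 * x) * cos (x / 2) := by
    have := cos_add_cos (5 * x / 2) (3 * x / 2)
    rw [show (5 * x / 2 + 3 * x / 2) / 2 = 2 * x by ring,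
      show (5 * x / 2 - 3 * x / 2) / 2 = x / 2 by ring] at this
    exact this
  have h7 : cos (7 * x / 2) + cos (x / 2) = 2 * cos (2 * x) * cos (3 * x / 2) := by
    have := cos_add_cos (7 * x / 2) (x / 2)
    rw [show (7 * x / 2 + x / 2) / 2 = 2 * x by ring,
      show (7 * x / 2 - x / 2) / 2 = 3 * x / 2 by ring] at this
    exact this
  -- key factorization
  have key : (1 + cos x + cos (2 * x) + cos (4 * x)) -
      (cos (x / 2) + cos (3 * x / 2) + cos (5 * x / 2) + cos (7 * x / 2)) =
      2 * (cos (x / 2) - cos x) * (cos (x / 2) - cos (3 * x)) := by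
    have e5 : cos (5 * x / 2) = 2 * cos (2 * x) * cos (x / 2) - cos (3 * x / 2) := by
      linarith
    have e7 : cos (7 * x / 2) = 2 * cos (2 * x) * cos (3 * x / 2) - cos (x / 2) := by
      linarith
    rw [e5, e7, h8, h6, h4, h3, h2]
    ring
  -- both factors are positive
  have ha : cos x < cos (x / 2) :=
    cos_lt_cos_of_nonneg_of_le_pi (by linarith) (by linarith) (by linarith)
  have hb : cos (3 * x) < cos (x / 2) :=
    cos_lt_cos_of_nonneg_of_le_pi (by linarith) (by linarith) (by linarith)
  nlinarith [mul_pos (sub_pos.mpr ha) (sub_pos.mpr hb)]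
end
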